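/- arXiv:0904.4507 — 4 statements merged into one kernel-verified Lean document; each statement's English description precedes it below -/
import Mathlib

section
/- If real numbers a_1,...,a_n satisfy a_1+...+a_n=0, then for all j,k in {1,...,n}, |sum_{i=1}^j a_i - sum_{i=1}^k a_i| <= (1/2) sum_{i=1}^n |a_i|. -/
open scoped BigOperators Classical

lemma subset_sum_abs_le (n : ℕ) (a : ℕ → ℝ)
    (hsum : ∑ i ∈ Finset.Icc 1 n, a i = 0)
    (s : Finset ℕ) (hs : s ⊆ Finset.Icc 1 n) :
    |∑ i ∈ s, a i| ≤ (1 / 2) * ∑ i ∈ Finset.Icc 1 n, |a i| := by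
  have h1 : |∑ i ∈ s, a i| ≤ ∑ i ∈ s, |a i| := Finset.abs_sum_le_sum_abs _ _
  have hsplit : ∑ i ∈ s, a i + ∑ i ∈ Finset.Icc 1 n \ s, a i = 0 := by
    rw [add_comm, Finset.sum_sdiff hs]; exact hsum
  have h2 : |∑ i ∈ s, a i| ≤ ∑ i ∈ Finset.Icc 1 n \ s, |a i| := by
    have : ∑ i ∈ s, a i = -∑ i ∈ Finset.Icc 1 n \ s, a i := by linarith
    rw [this, abs_neg]
    exact Finset.abs_sum_le_sum_abs _ _
  have htot : ∑ i ∈ s, |a i| + ∑ i ∈ Finset.Icc 1 n \ s, |a i|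
      = ∑ i ∈ Finset.Icc 1 n, |a i| := by
    rw [add_comm, Finset.sum_sdiff hs]
  linarith

theorem partial_sums_diff_le (n : ℕ) (a : ℕ → ℝ)
    (hsum : ∑ i ∈ Finset.Icc 1 n, a i = 0)
    (j k : ℕ) (hj : j ∈ Finset.Icc 1 n) (hk : k ∈ Finset.Icc 1 n) :
    |∑ i ∈ Finset.Icc 1 j, a i - ∑ i ∈ Finset.Icc 1 k, a i| ≤
      (1 / 2) * ∑ i ∈ Finset.Icc 1 n, |a i| := by
  simp only [Finset.mem_Icc] at hj hk
  wlog hjk : j ≤ k generalizing j k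
  · rw [abs_sub_comm]
    exact this k j hk hj (le_of_not_ge hjk)
  have hsub : Finset.Icc 1 j ⊆ Finset.Icc 1 k := Finset.Icc_subset_Icc_right hjk
  have hdiff : ∑ i ∈ Finset.Icc 1 k, a i - ∑ i ∈ Finset.Icc 1 j, a i
      = ∑ i ∈ Finset.Icc 1 k \ Finset.Icc 1 j, a i := by
    rw [eq_comm, eq_sub_iff_add_eq, Finset.sum_sdiff hsub]
  rw [abs_sub_comm, hdiff]
  exact subset_sum_abs_le n a hsum _ (Finset.sdiff_subset.trans (Finset.Icc_subset_Icc_right hk.2))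
end

section
/- For any rotor walk (x_0,r_0),(x_1,r_1),... associated with the Markov kernel p, any bounded function f : V -> R, and any time t, one has |sum_{s=0}^{t-1} Delta f(x_s)| <= |f(x_t) - f(x_0)| + (1/2) * sum_{u,v in V} d(u) p(u,v) |f(u) - f(v) + Delta f(u)|, where Delta f(u) := sum_v p(u,v) f(v) - f(u). -/
open scoped BigOperators Classical

/-- `(x, r)` is a rotor walk for the rotor mechanism `(d, succ)`.  Rotor values are
`0`-based: rotor value `j` at `u` means the rotor points to `succ u j`
(corresponding to `u^(j+1)` in `1`-based notation).  At each step the rotor at the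
current particle position is incremented cyclically and the particle moves in the
new rotor direction. -/
def IsRotorWalk {V : Type*} (d : V → ℕ) (succ : V → ℕ → V)
    (x : ℕ → V) (r : ℕ → V → ℕ) : Prop :=
  (∀ v, r 0 v < d v) ∧
  (∀ t, r (t + 1) (x t) = (r t (x t) + 1) % d (x t)) ∧
  (∀ t v, v ≠ x t → r (t + 1) v = r t v) ∧
  (∀ t, x (t + 1) = succ (x t) (r (t + 1) (x t)))

/-- the number of visits of the walk `x` to `v` strictly before time `t` -/
noncomputable def nvisits {V : Type*} (x : ℕ → V) (t : ℕ) (v : V) : ℕ :=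
  ((Finset.range t).filter fun s => x s = v).card

/-- the rotor mechanism `(d, succ)` realizes the transition kernel `p`:
`p u v` is the proportion of the `d u` successors of `u` equal to `v` -/
def Realizes {V : Type*} (d : V → ℕ) (succ : V → ℕ → V) (p : V → V → ℝ) : Prop :=
  (∀ u, 0 < d u) ∧
  ∀ u v, p u v = ((Finset.range (d u)).filter fun i => succ u i = v).card / d u

private lemma sum_shift_mod {M : Type*} [AddCommMonoid M] (d : ℕ) (g : ℕ → M) (c : ℕ) :
    ∑ k ∈ Finset.range d, g ((c + k) % d) = ∑ i ∈ Finset.range d, g i := by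
  induction c with
  | zero =>
    refine Finset.sum_congr rfl fun k hk => ?_
    rw [Nat.zero_add, Nat.mod_eq_of_lt (Finset.mem_range.mp hk)]
  | succ c ih =>
    rcases Nat.eq_zero_or_pos d with hd | hd
    · simp [hd]
    obtain ⟨m, rfl⟩ : ∃ m, d = m + 1 := ⟨d - 1, (Nat.succ_pred_eq_of_pos hd).symm⟩
    rw [← ih, Finset.sum_range_succ, Finset.sum_range_succ']
    simp only [Nat.add_zero]
    have h1 : ∀ k, (c + 1 + k) % (m + 1) = (c + (k + 1)) % (m + 1) := by
      intro k; ring_nf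
    have h2 : (c + 1 + m) % (m + 1) = c % (m + 1) := by
      have : c + 1 + m = c + (m + 1) := by ring
      rw [this, Nat.add_mod_right]
    rw [h2]
    congr 1
    exact Finset.sum_congr rfl fun k _ => by rw [h1]

private lemma window_zero (d : ℕ) (b : ℕ → ℝ) (hper : ∀ k, b (k + d) = b k)
    (hzero : ∑ k ∈ Finset.range d, b k = 0) (m : ℕ) :
    ∑ k ∈ Finset.range d, b (m + k) = 0 := by
  induction m with
  | zero => simp only [Nat.zero_add]; exact hzero
  | succ m ih =>
    rcases Nat.eq_zero_or_pos d with hd | hd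
    · simp [hd]
    obtain ⟨e, rfl⟩ : ∃ e, d = e + 1 := ⟨d - 1, (Nat.succ_pred_eq_of_pos hd).symm⟩
    rw [← ih, Finset.sum_range_succ, Finset.sum_range_succ']
    have h2 : b (m + 1 + e) = b (m + 0) := by
      have : m + 1 + e = m + (e + 1) := by ring
      rw [this, hper, Nat.add_zero]
    rw [h2]
    congr 1
    exact Finset.sum_congr rfl fun k _ => by rw [show m + 1 + k = m + (k + 1) by ring]

private lemma sum_range_split (b : ℕ → ℝ) (m n : ℕ) :
    ∑ k ∈ Finset.range (m + n), b k
      = ∑ k ∈ Finset.range m, b k + ∑ k ∈ Finset.range n, b (m + k) := by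
  exact Finset.sum_range_add b m n

private lemma partial_bound (d : ℕ) (hd : 0 < d) (b : ℕ → ℝ) (hper : ∀ k, b (k + d) = b k)
    (hzero : ∑ k ∈ Finset.range d, b k = 0) (n : ℕ) :
    |∑ k ∈ Finset.range n, b k| ≤ (1 / 2) * ∑ k ∈ Finset.range d, |b k| := by
  have hreduce : ∀ n, ∑ k ∈ Finset.range n, b k = ∑ k ∈ Finset.range (n % d), b k := by
    intro n
    induction n using Nat.strong_induction_on with
    | _ n ih =>
      by_cases h : n < d
      · rw [Nat.mod_eq_of_lt h]
      · push_neg at h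
        obtain ⟨m, rfl⟩ : ∃ m, n = m + d := ⟨n - d, (Nat.sub_add_cancel h).symm⟩
        rw [sum_range_split, window_zero d b hper hzero, add_zero, Nat.add_mod_right]
        exact ih m (by omega)
  rw [hreduce n]
  set m := n % d with hm
  have hmd : m ≤ d := le_of_lt (Nat.mod_lt _ hd)
  obtain ⟨e, he⟩ : ∃ e, d = m + e := ⟨d - m, (Nat.add_sub_cancel' hmd).symm⟩
  have hsplit := sum_range_split b m e
  rw [← he, hzero] at hsplit
  have hsplit2 := sum_range_split (fun k => |b k|) m e
  rw [← he] at hsplit2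
  have h1 : |∑ k ∈ Finset.range m, b k| ≤ ∑ k ∈ Finset.range m, |b k| :=
    Finset.abs_sum_le_sum_abs _ _
  have h2 : |∑ k ∈ Finset.range m, b k| ≤ ∑ k ∈ Finset.range e, |b (m + k)| := by
    have : ∑ k ∈ Finset.range m, b k = -∑ k ∈ Finset.range e, b (m + k) := by linarith
    rw [this, abs_neg]
    exact Finset.abs_sum_le_sum_abs _ _
  
  linarith

private lemma nvisits_succ {V : Type*} (x : ℕ → V) (t : ℕ) (v : V) :
    nvisits x (t + 1) v = nvisits x t v + (if x t = v then 1 else 0) := by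
  unfold nvisits
  rw [Finset.range_add_one, Finset.filter_insert]
  split
  · rw [Finset.card_insert_of_notMem (fun h => by simpa using (Finset.mem_filter.mp h).1)]
  · rw [add_zero]

private lemma visit_sum {V : Type*} (x : ℕ → V) (u : V) (g : ℕ → ℝ) (t : ℕ) :
    ∑ s ∈ (Finset.range t).filter (fun s => x s = u), g (nvisits x s u)
      = ∑ k ∈ Finset.range (nvisits x t u), g k := by
  induction t with
  | zero => simp [nvisits]
  | succ t ih =>
    rw [Finset.range_add_one, Finset.filter_insert]
    by_cases h : x t = u
    · rw [if_pos h,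
        Finset.sum_insert (fun hc => by simpa using (Finset.mem_filter.mp hc).1),
        ih, nvisits_succ, if_pos h, Finset.sum_range_succ, add_comm]
    · rw [if_neg h, ih, nvisits_succ, if_neg h, add_zero]

private lemma fiber_sum {V : Type*} (d : ℕ) (succ : ℕ → V) (w : V → ℝ) :
    ∑ v ∈ (Finset.range d).image succ,
        (((Finset.range d).filter fun i => succ i = v).card : ℝ) * w v
      = ∑ i ∈ Finset.range d, w (succ i) := by
  rw [← Finset.sum_fiberwise_of_maps_to (fun i hi => Finset.mem_image_of_mem succ hi)
    (fun i => w (succ i))]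
  refine Finset.sum_congr rfl fun v hv => ?_
  rw [Finset.sum_congr rfl (fun i hi => by rw [(Finset.mem_filter.mp hi).2]),
    Finset.sum_const, nsmul_eq_mul]

private lemma rotor_val {V : Type*} {d : V → ℕ} {succ : V → ℕ → V} {x : ℕ → V}
    {r : ℕ → V → ℕ} (hwalk : IsRotorWalk d succ x r) (s : ℕ) (v : V) :
    r s v = (r 0 v + nvisits x s v) % d v := by
  obtain ⟨h0, h1, h2, h3⟩ := hwalk
  induction s with
  | zero =>
    have h : nvisits x 0 v = 0 := by simp [nvisits]
    rw [h, Nat.add_zero, Nat.mod_eq_of_lt (h0 v)]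
  | succ s ih =>
    by_cases h : v = x s
    · subst h
      rw [h1 s, ih, Nat.mod_add_mod, nvisits_succ, if_pos rfl, Nat.add_assoc]
    · rw [h2 s v h, ih, nvisits_succ, if_neg (fun hh => h hh.symm), add_zero]

/-- **Key bound** (Proposition `key`).  For any rotor walk associated with the kernel
`p`, any bounded `f`, and any time `t`,
`|∑_{s<t} Δf(x_s)| ≤ |f(x_t) - f(x_0)| + (1/2) ∑_{u,v} d(u) p(u,v) |f(u) - f(v) + Δf(u)|`. -/
theorem key_bound {V : Type*} [Countable V]
    (d : V → ℕ) (succ : V → ℕ → V) (p : V → V → ℝ)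
    (hreal : Realizes d succ p)
    (x : ℕ → V) (r : ℕ → V → ℕ) (hwalk : IsRotorWalk d succ x r)
    (f : V → ℝ) (hf : ∃ Mf : ℝ, ∀ v, |f v| ≤ Mf)
    (Δ : V → ℝ) (hΔ : ∀ u, Δ u = (∑' v, p u v * f v) - f u)
    (hsum : Summable fun uv : V × V =>
      (d uv.1 : ℝ) * p uv.1 uv.2 * |f uv.1 - f uv.2 + Δ uv.1|)
    (t : ℕ) :
    |∑ s ∈ Finset.range t, Δ (x s)| ≤
      |f (x t) - f (x 0)| +
        (1 / 2) * ∑' uv : V × V,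
          (d uv.1 : ℝ) * p uv.1 uv.2 * |f uv.1 - f uv.2 + Δ uv.1| := by
  obtain ⟨hd, hp⟩ := hreal
  have hwalk' := hwalk
  obtain ⟨h0, h1, h2, h3⟩ := hwalk
  set g : V × V → ℝ := fun uv => (d uv.1 : ℝ) * p uv.1 uv.2 * |f uv.1 - f uv.2 + Δ uv.1|
    with hg
  have hpnn : ∀ u v, 0 ≤ p u v := by
    intro u v; rw [hp]; positivity
  have hgnn : ∀ uv, 0 ≤ g uv := fun uv =>
    mul_nonneg (mul_nonneg (Nat.cast_nonneg _) (hpnn _ _)) (abs_nonneg _)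
  set T : V → ℝ := fun u => ∑' v, p u v * f v with hT
  have hΔ' : ∀ u, Δ u = T u - f u := hΔ
  have hdne : ∀ u, (d u : ℝ) ≠ 0 := fun u => Nat.cast_ne_zero.mpr (hd u).ne'
  have himg : ∀ u v, v ∉ (Finset.range (d u)).image (succ u) → p u v = 0 := by
    intro u v hv
    rw [hp]
    have h : ((Finset.range (d u)).filter fun i => succ u i = v) = ∅ := by
      rw [Finset.filter_eq_empty_iff]
      intro i hi hiv
      exact hv (Finset.mem_image.mpr ⟨i, hi, hiv⟩)
    rw [h]
    simp
  have hTval : ∀ u, (d u : ℝ) * T u = ∑ i ∈ Finset.range (d u), f (succ u i) := by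
    intro u
    have e1 : T u = ∑ v ∈ (Finset.range (d u)).image (succ u), p u v * f v :=
      tsum_eq_sum (fun v hv => by rw [himg u v hv, zero_mul])
    rw [e1, Finset.mul_sum, ← fiber_sum (d u) (succ u) f]
    refine Finset.sum_congr rfl fun v hv => ?_
    rw [hp, div_mul_eq_mul_div, mul_div_assoc']
    exact mul_div_cancel_left₀ _ (hdne u)
  set S : V → ℝ := fun u => ∑ i ∈ Finset.range (d u), |f u - f (succ u i) + Δ u| with hS
  have hstep : ∀ s, x (s + 1) = succ (x s) ((r 0 (x s) + 1 + nvisits x s (x s)) % d (x s)) := by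
    intro s
    rw [h3 s, h1 s, rotor_val hwalk' s (x s), Nat.mod_add_mod]
    congr 2
    ring
  have htel : ∑ s ∈ Finset.range t, Δ (x s)
      = (f (x t) - f (x 0)) + ∑ s ∈ Finset.range t, (T (x s) - f (x (s + 1))) := by
    rw [← Finset.sum_range_sub (fun s => f (x s)) t, ← Finset.sum_add_distrib]
    exact Finset.sum_congr rfl fun s _ => by rw [hΔ' (x s)]; ring
  set F := (Finset.range t).image x with hF
  have hgroup : ∑ s ∈ Finset.range t, (T (x s) - f (x (s + 1)))
      = ∑ u ∈ F, ∑ s ∈ (Finset.range t).filter (fun s => x s = u), (T (x s) - f (x (s + 1))) :=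
    (Finset.sum_fiberwise_of_maps_to (fun s hs => Finset.mem_image_of_mem x hs) _).symm
  have hinner : ∀ u ∈ F,
      |∑ s ∈ (Finset.range t).filter (fun s => x s = u), (T (x s) - f (x (s + 1)))|
        ≤ (1 / 2) * S u := by
    intro u _
    set b : ℕ → ℝ := fun k => T u - f (succ u ((r 0 u + 1 + k) % d u)) with hb
    have e1 : ∑ s ∈ (Finset.range t).filter (fun s => x s = u), (T (x s) - f (x (s + 1)))
        = ∑ s ∈ (Finset.range t).filter (fun s => x s = u), b (nvisits x s u) := by
      refine Finset.sum_congr rfl fun s hs => ?_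
      have hsu : x s = u := by
        have := (Finset.mem_filter.mp hs).2
        simpa using this
      rw [hstep s, hsu, hb]
    rw [e1, visit_sum]
    have hper : ∀ k, b (k + d u) = b k := by
      intro k
      simp only [hb]
      rw [show r 0 u + 1 + (k + d u) = (r 0 u + 1 + k) + d u by ring, Nat.add_mod_right]
    have hshift := sum_shift_mod (d u) (fun i => T u - f (succ u i)) (r 0 u + 1)
    have hzero : ∑ k ∈ Finset.range (d u), b k = 0 := by
      rw [hb]
      rw [hshift, Finset.sum_sub_distrib, Finset.sum_const, nsmul_eq_mul, Finset.card_range,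
        hTval u, sub_self]
    have habs : ∑ k ∈ Finset.range (d u), |b k| = S u := by
      rw [hb]
      have := sum_shift_mod (d u) (fun i => |T u - f (succ u i)|) (r 0 u + 1)
      rw [this, hS]
      refine Finset.sum_congr rfl fun i _ => ?_
      rw [hΔ' u]
      ring_nf
    rw [← habs]
    exact partial_bound (d u) (hd u) b hper hzero (nvisits x t u)
  have hSg : ∀ u, S u = ∑ v ∈ (Finset.range (d u)).image (succ u), g (u, v) := by
    intro u
    simp only [hS]
    rw [← fiber_sum (d u) (succ u) (fun v => |f u - f v + Δ u|)]
    refine Finset.sum_congr rfl fun v hv => ?_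
    simp only [hg]
    rw [hp, mul_div_assoc', mul_div_cancel_left₀ _ (hdne u)]
  set G := F.biUnion (fun u => (Finset.range (d u)).image (succ u)) with hG
  have hsub : ∀ u ∈ F, (Finset.range (d u)).image (succ u) ⊆ G := by
    intro u hu
    rw [hG]
    exact Finset.subset_biUnion_of_mem (fun w => (Finset.range (d w)).image (succ w)) hu
  have hFbound : ∑ u ∈ F, S u ≤ ∑' uv : V × V, g uv := by
    have e2 : ∀ u ∈ F, S u ≤ ∑ v ∈ G, g (u, v) := by
      intro u hu
      rw [hSg u]
      exact Finset.sum_le_sum_of_subset_of_nonneg (hsub u hu)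
        (fun v _ _ => hgnn (u, v))
    calc ∑ u ∈ F, S u ≤ ∑ u ∈ F, ∑ v ∈ G, g (u, v) := Finset.sum_le_sum e2
      _ = ∑ uv ∈ F ×ˢ G, g uv := (Finset.sum_product _ _ _).symm
      _ ≤ ∑' uv : V × V, g uv := Summable.sum_le_tsum _ (fun uv _ => hgnn uv) hsum
  have hEbound : |∑ s ∈ Finset.range t, (T (x s) - f (x (s + 1)))|
      ≤ (1 / 2) * ∑' uv : V × V, g uv := by
    rw [hgroup]
    calc |∑ u ∈ F, ∑ s ∈ (Finset.range t).filter (fun s => x s = u), (T (x s) - f (x (s + 1)))|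
        ≤ ∑ u ∈ F, |∑ s ∈ (Finset.range t).filter (fun s => x s = u), (T (x s) - f (x (s + 1)))| :=
          Finset.abs_sum_le_sum_abs _ _
      _ ≤ ∑ u ∈ F, (1 / 2) * S u := Finset.sum_le_sum hinner
      _ = (1 / 2) * ∑ u ∈ F, S u := by rw [Finset.mul_sum]
      _ ≤ (1 / 2) * ∑' uv : V × V, g uv := by linarith [hFbound]
  calc |∑ s ∈ Finset.range t, Δ (x s)|
      = |(f (x t) - f (x 0)) + ∑ s ∈ Finset.range t, (T (x s) - f (x (s + 1)))| := by rw [htel]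
    _ ≤ |f (x t) - f (x 0)| + |∑ s ∈ Finset.range t, (T (x s) - f (x (s + 1)))| := abs_add_le _ _
    _ ≤ |f (x t) - f (x 0)| + (1 / 2) * ∑' uv : V × V, g uv := by linarith [hEbound]
end

section
/- For an irreducible positive recurrent Markov chain on a finite set V with stationary distribution pi and k(v) = E_v[T_b], define K_4 := max_v k(v) + (1/2)( d(b)/pi(b) + sum_{u,v} d(u)p(u,v)|k(u)-k(v)-1| ). Then for any rotor walk and all t >= 1, | pi(b) - n_t(b)/t | <= K_4 pi(b)/t. -/
open Finset


open scoped BigOperators Classical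

/-- irreducibility of the kernel: any vertex can be reached from any other by a path of
positive-probability steps -/
def IrreducibleKernel {V : Type*} (p : V → V → ℝ) : Prop :=
  ∀ u v : V, ∃ (n : ℕ) (f : ℕ → V), f 0 = u ∧ f n = v ∧ ∀ i < n, 0 < p (f i) (f (i + 1))


lemma auxA {ι : Type*} [DecidableEq ι] (T S : Finset ι) (hST : S ⊆ T) (y : ι → ℝ)
    (h0 : ∑ i ∈ T, y i = 0) : |∑ i ∈ S, y i| ≤ (1/2) * ∑ i ∈ T, |y i| := by
  have key : ∀ S' : Finset ι, S' ⊆ T → ∑ i ∈ S', y i ≤ (1/2) * ∑ i ∈ T, |y i| := by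
    intro S' hS'
    have h1 : ∑ i ∈ S', y i ≤ ∑ i ∈ S', (|y i| + y i)/2 :=
      Finset.sum_le_sum fun i _ => by have := le_abs_self (y i); linarith
    have h2 : ∑ i ∈ S', (|y i| + y i)/2 ≤ ∑ i ∈ T, (|y i| + y i)/2 :=
      Finset.sum_le_sum_of_subset_of_nonneg hS' fun i _ _ => by
        have := neg_abs_le (y i); linarith
    have h3 : ∑ i ∈ T, (|y i| + y i)/2 = (1/2) * ∑ i ∈ T, |y i| := by
      rw [show (fun i => (|y i| + y i)/2) = fun i => (1/2) * |y i| + (1/2) * y i by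
        funext i; ring]
      rw [Finset.sum_add_distrib, ← Finset.mul_sum, ← Finset.mul_sum, h0]; ring
    linarith
  rw [abs_le]
  refine ⟨?_, key S hST⟩
  have h4 := key (T \ S) Finset.sdiff_subset
  have h5 : ∑ i ∈ T \ S, y i + ∑ i ∈ S, y i = 0 := by rw [Finset.sum_sdiff hST, h0]
  linarith

lemma auxC (d : ℕ) (f : ℕ → ℝ) (c : ℕ) :
    ∑ m ∈ range d, f ((c + m) % d) = ∑ j ∈ range d, f (j % d) := by
  induction c with
  | zero => simp
  | succ c ih =>
    rw [← ih]
    calc ∑ m ∈ range d, f ((c + 1 + m) % d)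
        = ∑ m ∈ range d, f ((c + (m + 1)) % d) :=
          Finset.sum_congr rfl fun m _ => by rw [show c + 1 + m = c + (m+1) by ring]
      _ = ∑ m ∈ range d, f ((c + m) % d) := by
          have h1 := Finset.sum_range_succ' (fun m => f ((c + m) % d)) d
          have h2 := Finset.sum_range_succ (fun m => f ((c + m) % d)) d
          have h3 : f ((c + d) % d) = f ((c + 0) % d) := by
            rw [Nat.add_mod_right, Nat.add_zero]
          linarith [h1, h2, h3]

lemma auxB (d : ℕ) (hd : 0 < d) (a : ℕ → ℝ)
    (hblock : ∀ c, ∑ m ∈ range d, a (c + m) = 0) :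
    ∀ N, ∑ m ∈ range N, a m = ∑ m ∈ range (N % d), a m := by
  intro N
  induction N using Nat.strong_induction_on with
  | _ N ih =>
    by_cases h : N < d
    · rw [Nat.mod_eq_of_lt h]
    · push_neg at h
      have hN : N - d + d = N := Nat.sub_add_cancel h
      have hsplit : ∑ m ∈ range N, a m
          = ∑ m ∈ range (N - d), a m + ∑ m ∈ range d, a (N - d + m) := by
        rw [← Finset.sum_range_add, hN]
      rw [hsplit, hblock (N - d), add_zero, Nat.mod_eq_sub_mod h]
      exact ih (N - d) (by omega)


/-- **Stationary distribution** (Theorem `stat-prob`). -/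
theorem rotor_stationary_distribution {V : Type*} [Fintype V]
    (d : V → ℕ) (succ : V → ℕ → V) (p : V → V → ℝ)
    (hreal : Realizes d succ p) (hirr : IrreducibleKernel p)
    (π : V → ℝ) (hπpos : ∀ v, 0 < π v) (hπone : ∑ v, π v = 1)
    (hπ : ∀ v, ∑ u, π u * p u v = π v)
    (b : V)
    (k : V → ℝ) (hkb : k b = 0)
    (hk : ∀ u, u ≠ b → k u = 1 + ∑ v, p u v * k v)
    (K₄ : ℝ)
    (hK₄ : K₄ = (⨆ v, k v) + (1 / 2) * ((d b : ℝ) / π b +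
      ∑ u, ∑ v, (d u : ℝ) * p u v * |k u - k v - 1|))
    (x : ℕ → V) (r : ℕ → V → ℕ) (hwalk : IsRotorWalk d succ x r)
    (t : ℕ) (ht : 1 ≤ t) :
    |π b - (nvisits x t b : ℝ) / (t : ℝ)| ≤ K₄ * π b / (t : ℝ) := by
  obtain ⟨hd, hp⟩ := hreal
  obtain ⟨hr0, hrinc, hrfix, hxstep⟩ := hwalk
  have : Nonempty V := ⟨b⟩
  have hπb := hπpos b
  have hdb : ∀ u, (0:ℝ) < (d u : ℝ) := fun u => by exact_mod_cast hd u
  have hp0 : ∀ u v, 0 ≤ p u v := fun u v => by rw [hp]; positivity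
  -- rows sum to one
  have hrow : ∀ u, ∑ v, p u v = 1 := by
    intro u
    have hfib : (range (d u)).card
        = ∑ v, ((range (d u)).filter fun i => succ u i = v).card :=
      Finset.card_eq_sum_card_fiberwise fun i _ => mem_univ _
    have : ∑ v, p u v
        = (((range (d u)).card : ℝ)) / d u := by
      rw [hfib]
      push_cast
      rw [Finset.sum_div]
      exact Finset.sum_congr rfl fun v _ => (hp u v).symm ▸ rfl
    rw [this, Finset.card_range, div_self (ne_of_gt (hdb u))]
  -- expected next value of k
  set g : V → ℝ := fun u => ∑ v, p u v * k v with hg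
  -- fiberwise identities
  have hcard : ∀ u v, ((((range (d u)).filter fun i => succ u i = v).card : ℝ))
      = (d u : ℝ) * p u v := by
    intro u v
    rw [hp u v, mul_div_cancel₀]
    exact ne_of_gt (hdb u)
  have hfibsum : ∀ (u : V) (F : V → ℝ),
      ∑ j ∈ range (d u), F (succ u j) = ∑ v, (d u : ℝ) * p u v * F v := by
    intro u F
    rw [← Finset.sum_fiberwise (range (d u)) (fun j => succ u j) (fun j => F (succ u j))]
    refine Finset.sum_congr rfl fun v _ => ?_
    have h1 : ∑ j ∈ (range (d u)).filter (fun i => succ u i = v), F (succ u j)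
        = ∑ j ∈ (range (d u)).filter (fun i => succ u i = v), F v :=
      Finset.sum_congr rfl fun j hj => by rw [(Finset.mem_filter.mp hj).2]
    rw [h1, Finset.sum_const, nsmul_eq_mul, hcard u v]
  have hzero : ∀ u, ∑ j ∈ range (d u), (g u - k (succ u j)) = 0 := by
    intro u
    rw [Finset.sum_sub_distrib, Finset.sum_const, Finset.card_range, nsmul_eq_mul,
      hfibsum u k]
    have : ∑ v, (d u : ℝ) * p u v * k v = (d u : ℝ) * ∑ v, p u v * k v := by
      rw [Finset.mul_sum]; exact Finset.sum_congr rfl fun v _ => by ring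
    rw [this, hg]
    ring
  have habs : ∀ u, ∑ j ∈ range (d u), |g u - k (succ u j)|
      = ∑ v, (d u : ℝ) * p u v * |g u - k v| :=
    fun u => hfibsum u (fun v => |g u - k v|)
  -- value of g at b via stationarity
  have hgb : g b = 1 / π b - 1 := by
    have hswap0 : ∑ u, π u * g u = ∑ v, π v * k v := by
      calc ∑ u, π u * g u = ∑ u, ∑ v, π u * (p u v * k v) :=
            Finset.sum_congr rfl fun u _ => by rw [hg]; exact Finset.mul_sum _ _ _
        _ = ∑ v, ∑ u, π u * (p u v * k v) := Finset.sum_comm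
        _ = ∑ v, (∑ u, π u * p u v) * k v := by
            refine Finset.sum_congr rfl fun v _ => ?_
            rw [Finset.sum_mul]; exact Finset.sum_congr rfl fun u _ => by ring
        _ = ∑ v, π v * k v := Finset.sum_congr rfl fun v _ => by rw [hπ v]
    have hzero2 : ∑ u, (π u * k u - π u * g u) = 0 := by
      rw [Finset.sum_sub_distrib, hswap0, sub_self]
    have e1 : ∀ u : V, π u * k u - π u * g u = π u * (k u - g u) := fun u => by ring
    rw [Finset.sum_congr rfl fun u _ => e1 u] at hzero2
    have hs1 : π b * (k b - g b) + ∑ u ∈ univ.erase b, π u * (k u - g u)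
        = ∑ u, π u * (k u - g u) :=
      Finset.add_sum_erase univ (fun u => π u * (k u - g u)) (mem_univ b)
    have hs2 : π b + ∑ u ∈ univ.erase b, π u = ∑ u, π u :=
      Finset.add_sum_erase univ π (mem_univ b)
    have he1 : ∑ u ∈ univ.erase b, π u * (k u - g u) = ∑ u ∈ univ.erase b, π u := by
      refine Finset.sum_congr rfl fun u hu => ?_
      have hu' := Finset.ne_of_mem_erase hu
      have := hk u hu'
      have hgu : k u - g u = 1 := by rw [hg]; linarith
      rw [hgu, mul_one]
    rw [hπone] at hs2
    rw [he1, hkb, hzero2] at hs1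
    have hpb := hπpos b
    have : π b * (0 - g b) + (1 - π b) = 0 := by linarith
    field_simp
    nlinarith [this]
  -- correction term
  set cf : V → ℝ := fun u => if u = b then 1 - 1/π b else 1 with hcf
  have hkc : ∀ u, k u - g u = cf u := by
    intro u
    by_cases h : u = b
    · subst h
      have hcu : cf u = 1 - 1/π u := by simp [hcf]
      rw [hcu, hkb, hgb]; ring
    · rw [hcf]; simp only [if_neg h]; have := hk u h; rw [hg]; linarith
  set df : ℕ → ℝ := fun s => g (x s) - k (x (s+1)) with hdf
  have htel : k (x 0) - k (x t) = (∑ s ∈ range t, cf (x s)) + ∑ s ∈ range t, df s := by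
    calc k (x 0) - k (x t) = ∑ s ∈ range t, (k (x s) - k (x (s+1))) :=
          (Finset.sum_range_sub' (fun s => k (x s)) t).symm
      _ = ∑ s ∈ range t, (cf (x s) + df s) := Finset.sum_congr rfl fun s _ => by
          have := hkc (x s); rw [hdf]; simp only; linarith
      _ = _ := Finset.sum_add_distrib
  have hnv : ∀ s u, nvisits x (s+1) u = nvisits x s u + (if x s = u then 1 else 0) := by
    intro s u
    by_cases h : x s = u <;>
      simp [nvisits, Finset.range_add_one, Finset.filter_insert, h,
        Finset.card_insert_of_notMem, Finset.notMem_range_self]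
  have hri : ∀ s u, r s u = (r 0 u + nvisits x s u) % d u := by
    intro s
    induction s with
    | zero =>
      intro u
      have : nvisits x 0 u = 0 := by simp [nvisits]
      rw [this, Nat.add_zero, Nat.mod_eq_of_lt (hr0 u)]
    | succ s ih =>
      intro u
      by_cases h : x s = u
      · have h1 := hrinc s
        rw [h] at h1
        rw [h1, ih u, hnv s u, if_pos h, Nat.mod_add_mod, Nat.add_assoc]
      · have h1 := hrfix s u (fun he => h he.symm)
        rw [h1, ih u, hnv s u, if_neg h, Nat.add_zero]
  set af : V → ℕ → ℝ := fun u m => g u - k (succ u ((r 0 u + 1 + m) % d u)) with haf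
  have hdelta_eq : ∀ s u, x s = u → df s = af u (nvisits x s u) := by
    intro s u h
    have h1 := hrinc s
    rw [h] at h1
    have h2 : r (s+1) u = (r 0 u + 1 + nvisits x s u) % d u := by
      rw [h1, hri s u, Nat.mod_add_mod,
        show r 0 u + nvisits x s u + 1 = r 0 u + 1 + nvisits x s u by ring]
    rw [hdf, haf]
    simp only
    rw [hxstep s, h, h2]
  have hgroup : ∀ u s, ∑ σ ∈ range s, (if x σ = u then df σ else 0)
      = ∑ m ∈ range (nvisits x s u), af u m := by
    intro u s
    induction s with
    | zero => simp [nvisits]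
    | succ s ih =>
      rw [Finset.sum_range_succ, ih, hnv s u]
      by_cases h : x s = u
      · rw [if_pos h, if_pos h, Finset.sum_range_succ, hdelta_eq s u h]
      · rw [if_neg h, if_neg h, Nat.add_zero, add_zero]
  have hswap2 : ∑ s ∈ range t, df s = ∑ u, ∑ m ∈ range (nvisits x t u), af u m := by
    have h1 : ∀ s, df s = ∑ u, (if x s = u then df s else 0) := fun s => by
      rw [Finset.sum_ite_eq univ (x s) (fun _ => df s), if_pos (mem_univ _)]
    calc ∑ s ∈ range t, df s = ∑ s ∈ range t, ∑ u, (if x s = u then df s else 0) :=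
          Finset.sum_congr rfl fun s _ => h1 s
      _ = ∑ u, ∑ s ∈ range t, (if x s = u then df s else 0) := Finset.sum_comm
      _ = _ := Finset.sum_congr rfl fun u _ => hgroup u t
  have hub : ∀ u, |∑ m ∈ range (nvisits x t u), af u m|
      ≤ (1/2) * ∑ j ∈ range (d u), |g u - k (succ u j)| := by
    intro u
    have hblock : ∀ c, ∑ m ∈ range (d u), af u (c + m) = 0 := by
      intro c
      calc ∑ m ∈ range (d u), af u (c + m)
          = ∑ m ∈ range (d u), (g u - k (succ u (((r 0 u + 1 + c) + m) % d u))) :=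
            Finset.sum_congr rfl fun m _ => by
              rw [haf]; simp only
              rw [show r 0 u + 1 + (c + m) = r 0 u + 1 + c + m by ring]
        _ = ∑ j ∈ range (d u), (g u - k (succ u (j % d u))) :=
            auxC (d u) (fun j => g u - k (succ u j)) (r 0 u + 1 + c)
        _ = ∑ j ∈ range (d u), (g u - k (succ u j)) :=
            Finset.sum_congr rfl fun j hj => by
              rw [Nat.mod_eq_of_lt (mem_range.mp hj)]
        _ = 0 := hzero u
    have hred := auxB (d u) (hd u) (af u) hblock (nvisits x t u)
    set ρ := nvisits x t u % d u with hρ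
    have hρlt : ρ < d u := Nat.mod_lt _ (hd u)
    have hinj : ∀ m1 ∈ range ρ, ∀ m2 ∈ range ρ,
        (r 0 u + 1 + m1) % d u = (r 0 u + 1 + m2) % d u → m1 = m2 := by
      intro m1 h1 m2 h2 he
      have hm1 : m1 < d u := lt_trans (mem_range.mp h1) hρlt
      have hm2 : m2 < d u := lt_trans (mem_range.mp h2) hρlt
      have hmod : m1 % d u = m2 % d u := Nat.ModEq.add_left_cancel' (r 0 u + 1) he
      rwa [Nat.mod_eq_of_lt hm1, Nat.mod_eq_of_lt hm2] at hmod
    have himg : ∑ m ∈ range ρ, af u m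
        = ∑ j ∈ (range ρ).image (fun m => (r 0 u + 1 + m) % d u), (g u - k (succ u j)) := by
      rw [Finset.sum_image hinj]
    have hsub : (range ρ).image (fun m => (r 0 u + 1 + m) % d u) ⊆ range (d u) := by
      intro j hj
      obtain ⟨m, _, rfl⟩ := Finset.mem_image.mp hj
      exact mem_range.mpr (Nat.mod_lt _ (hd u))
    have hA := auxA (range (d u)) _ hsub (fun j => g u - k (succ u j)) (hzero u)
    rw [hred, himg]
    exact hA
  have hdeltabound : |∑ s ∈ range t, df s|
      ≤ (1/2) * ((d b : ℝ)/π b + ∑ u, ∑ v, (d u : ℝ) * p u v * |k u - k v - 1|) := by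
    rw [hswap2]
    have step1 : |∑ u, ∑ m ∈ range (nvisits x t u), af u m|
        ≤ ∑ u, (1/2) * ∑ j ∈ range (d u), |g u - k (succ u j)| :=
      le_trans (Finset.abs_sum_le_sum_abs _ _) (Finset.sum_le_sum fun u _ => hub u)
    have step2 : ∑ u, (1/2) * ∑ j ∈ range (d u), |g u - k (succ u j)|
        = (1/2) * ∑ u, ∑ v, (d u : ℝ) * p u v * |g u - k v| := by
      rw [Finset.mul_sum]
      exact Finset.sum_congr rfl fun u _ => by rw [habs u]
    have step3 : ∑ u, ∑ v, (d u : ℝ) * p u v * |g u - k v|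
        ≤ (d b : ℝ)/π b + ∑ u, ∑ v, (d u : ℝ) * p u v * |k u - k v - 1| := by
      have hterm : ∀ u ∈ univ.erase b, ∑ v, (d u : ℝ) * p u v * |g u - k v|
          = ∑ v, (d u : ℝ) * p u v * |k u - k v - 1| := by
        intro u hu
        have hu' := Finset.ne_of_mem_erase hu
        refine Finset.sum_congr rfl fun v _ => ?_
        have hgu : g u = k u - 1 := by have := hk u hu'; rw [hg]; linarith
        rw [hgu, show k u - 1 - k v = k u - k v - 1 by ring]
      have hbb : ∑ v, (d b : ℝ) * p b v * |g b - k v|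
          ≤ (d b : ℝ)/π b + ∑ v, (d b : ℝ) * p b v * |k b - k v - 1| := by
        have h1 : ∀ v, (d b : ℝ) * p b v * |g b - k v|
            ≤ (d b : ℝ) * p b v * (1/π b) + (d b : ℝ) * p b v * |k b - k v - 1| := by
          intro v
          have h2 : |g b - k v| ≤ 1/π b + |k b - k v - 1| := by
            rw [hgb, hkb]
            have h4 : |1/π b - (1 + k v)| ≤ |1/π b| + |1 + k v| := abs_sub _ _
            rw [abs_of_pos (by positivity : (0:ℝ) < 1/π b)] at h4
            rw [show (0:ℝ) - k v - 1 = -(1 + k v) by ring, abs_neg,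
              show 1/π b - 1 - k v = 1/π b - (1 + k v) by ring]
            exact h4
          have h6 : (0:ℝ) ≤ (d b : ℝ) * p b v := mul_nonneg (le_of_lt (hdb b)) (hp0 b v)
          calc (d b : ℝ) * p b v * |g b - k v|
              ≤ (d b : ℝ) * p b v * (1/π b + |k b - k v - 1|) :=
                mul_le_mul_of_nonneg_left h2 h6
            _ = _ := by ring
        calc ∑ v, (d b : ℝ) * p b v * |g b - k v|
            ≤ ∑ v, ((d b : ℝ) * p b v * (1/π b) + (d b : ℝ) * p b v * |k b - k v - 1|) :=
              Finset.sum_le_sum fun v _ => h1 v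
          _ = (d b : ℝ) * (1/π b) * (∑ v, p b v)
              + ∑ v, (d b : ℝ) * p b v * |k b - k v - 1| := by
              rw [Finset.sum_add_distrib, Finset.mul_sum]
              congr 1
              exact Finset.sum_congr rfl fun v _ => by ring
          _ = (d b : ℝ)/π b + ∑ v, (d b : ℝ) * p b v * |k b - k v - 1| := by
              rw [hrow b, mul_one, mul_one_div]
      have hs1 := Finset.add_sum_erase univ (fun u => ∑ v, (d u : ℝ) * p u v * |g u - k v|)
        (mem_univ b)
      have hs2 := Finset.add_sum_erase univ
        (fun u => ∑ v, (d u : ℝ) * p u v * |k u - k v - 1|) (mem_univ b)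
      have herase := Finset.sum_congr rfl hterm
      rw [← hs1, ← hs2, herase]
      linarith [hbb]
    calc |∑ u, ∑ m ∈ range (nvisits x t u), af u m|
        ≤ (1/2) * ∑ u, ∑ v, (d u : ℝ) * p u v * |g u - k v| := step2 ▸ step1
      _ ≤ _ := by linarith [step3]
  -- nonnegativity of k and its supremum
  have hk0 : ∀ v, 0 ≤ k v := by
    obtain ⟨u₀, _, hmin⟩ := Finset.exists_min_image univ k ⟨b, mem_univ b⟩
    by_cases h : u₀ = b
    · intro v
      have := hmin v (mem_univ v)
      rw [h, hkb] at this
      linarith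
    · exfalso
      have h1 := hk u₀ h
      have h2 : ∑ v, p u₀ v * k u₀ ≤ ∑ v, p u₀ v * k v :=
        Finset.sum_le_sum fun v _ =>
          mul_le_mul_of_nonneg_left (hmin v (mem_univ v)) (hp0 u₀ v)
      have h3 : ∑ v, p u₀ v * k u₀ = k u₀ := by rw [← Finset.sum_mul, hrow u₀, one_mul]
      linarith
  have hbdd : BddAbove (Set.range k) := Set.Finite.bddAbove (Set.finite_range k)
  have hkM : ∀ v, k v ≤ ⨆ v, k v := fun v => le_ciSup hbdd v
  -- sum of corrections
  have hcsum : ∑ s ∈ range t, cf (x s) = (t : ℝ) - (nvisits x t b : ℝ)/π b := by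
    have h1 : ∀ s, cf (x s) = 1 - (1/π b) * (if x s = b then 1 else 0) := by
      intro s
      by_cases h : x s = b <;> simp [hcf, h]
    rw [Finset.sum_congr rfl fun s _ => h1 s, Finset.sum_sub_distrib, Finset.sum_const,
      ← Finset.mul_sum, Finset.sum_boole, Finset.card_range]
    rw [nsmul_eq_mul, mul_one]
    rw [show ((((range t).filter fun s => x s = b)).card : ℝ) = (nvisits x t b : ℝ) from rfl]
    ring
  have hfinal1 : (t:ℝ) - (nvisits x t b : ℝ)/π b
      = (k (x 0) - k (x t)) - ∑ s ∈ range t, df s := by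
    rw [← hcsum]; linarith [htel]
  have habsk : |k (x 0) - k (x t)| ≤ ⨆ v, k v := by
    rw [abs_le]
    constructor
    · linarith [hk0 (x 0), hkM (x t)]
    · linarith [hk0 (x t), hkM (x 0)]
  have hKbound : |(t:ℝ) - (nvisits x t b : ℝ)/π b| ≤ K₄ := by
    rw [hfinal1, hK₄]
    calc |(k (x 0) - k (x t)) - ∑ s ∈ range t, df s|
        ≤ |k (x 0) - k (x t)| + |∑ s ∈ range t, df s| := abs_sub _ _
      _ ≤ _ := add_le_add habsk hdeltabound
  have htpos : (0:ℝ) < (t:ℝ) := by exact_mod_cast ht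
  have heq : π b - (nvisits x t b : ℝ)/(t:ℝ)
      = (π b / (t:ℝ)) * ((t:ℝ) - (nvisits x t b : ℝ)/π b) := by
    field_simp
  calc |π b - (nvisits x t b : ℝ)/(t:ℝ)|
      = (π b/(t:ℝ)) * |(t:ℝ) - (nvisits x t b : ℝ)/π b| := by
        rw [heq, abs_mul, abs_of_pos (by positivity : (0:ℝ) < π b / (t:ℝ))]
    _ ≤ (π b/(t:ℝ)) * K₄ :=
        mul_le_mul_of_nonneg_left hKbound (le_of_lt (by positivity))
    _ = K₄ * π b / (t:ℝ) := by ring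
end

section
/- Let b,c be distinct vertices of an irreducible recurrent Markov chain with stationary vector pi. Then pi(b) e_{b,c} = pi(c) e_{c,b}, where e_{u,v} = P_u(T_v < T_u^+). Moreover, the hitting probability h = h_{b,c} satisfies Delta h(b) = -e_{b,c} and Delta h(c) = e_{c,b}. -/
open scoped BigOperators Classical

/-- `hitAux p b c t v` is the probability, for the Markov chain with kernel `p`
started at `v`, of hitting `b` before hitting `c` and within `t` steps. -/
noncomputable def hitAux {V : Type*} (p : V → V → ℝ) (b c : V) : ℕ → V → ℝ
  | 0, v => if v = b then 1 else 0
  | t + 1, v => if v = b then 1 else if v = c then 0 else ∑' w, p v w * hitAux p b c t w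

/-- the hitting probability `h_{b,c}(v) = P_v(T_b < T_c)`, as the monotone limit of the
probabilities of hitting `b` before `c` within `t` steps.  (Taking `b = c` gives the
single-target hitting probability `P_v(T_b < ∞)`.) -/
noncomputable def hitProb {V : Type*} (p : V → V → ℝ) (b c : V) (v : V) : ℝ :=
  ⨆ t, hitAux p b c t v

/-- the escape probability `e_{u,v} = P_u(T_v < T_u^+)`: a first step from `u` to `w`,
then hit `v` before `u`. -/
noncomputable def escProb {V : Type*} (p : V → V → ℝ) (u v : V) : ℝ :=
  ∑' w, p u w * hitProb p v u w

/-- recurrence: `P_v(T_v^+ < ∞) = 1` for every `v` -/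
def RecurrentKernel {V : Type*} (p : V → V → ℝ) : Prop :=
  ∀ v : V, ∑' w, p v w * hitProb p v v w = 1

/-- `p` is a Markov transition kernel with finitely many successors at each vertex -/
def IsKernel {V : Type*} (p : V → V → ℝ) : Prop :=
  (∀ u v, 0 ≤ p u v) ∧ (∀ u, HasSum (p u) 1) ∧ ∀ u, (Function.support (p u)).Finite

section lemmas
variable {V : Type*} [Countable V] {p : V → V → ℝ} (hker : IsKernel p) (b c : V)
include hker
set_option linter.unusedSectionVars false

omit hker in
lemma hitAux_zero (v : V) : hitAux p b c 0 v = if v = b then 1 else 0 := rfl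

omit hker in
lemma hitAux_succ (t : ℕ) (v : V) : hitAux p b c (t+1) v =
    if v = b then 1 else if v = c then 0 else ∑' w, p v w * hitAux p b c t w := rfl

lemma summable_mul (u : V) (f : V → ℝ) : Summable (fun w => p u w * f w) := by
  apply summable_of_finite_support
  apply (hker.2.2 u).subset
  intro w hw
  simp only [Function.mem_support] at hw ⊢
  intro h0; exact hw (by simp [h0])

lemma tsum_p_one (u : V) : ∑' w, p u w = 1 := (hker.2.1 u).tsum_eq

lemma hitAux_nonneg : ∀ t v, 0 ≤ hitAux p b c t v := by
  intro t
  induction t with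
  | zero => intro v; simp only [hitAux]; split <;> norm_num
  | succ t ih =>
    intro v; simp only [hitAux]
    split
    · norm_num
    split
    · norm_num
    · exact tsum_nonneg fun w => mul_nonneg (hker.1 _ _) (ih w)

lemma hitAux_le_one : ∀ t v, hitAux p b c t v ≤ 1 := by
  intro t
  induction t with
  | zero => intro v; simp only [hitAux]; split <;> norm_num
  | succ t ih =>
    intro v; simp only [hitAux]
    split
    · norm_num
    split
    · norm_num
    · calc ∑' w, p v w * hitAux p b c t w ≤ ∑' w, p v w := by
            refine Summable.tsum_le_tsum (fun w => ?_) (summable_mul hker v _)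
              (summable_mul hker v 1 |>.congr (by simp))
            calc p v w * hitAux p b c t w ≤ p v w * 1 :=
                  mul_le_mul_of_nonneg_left (ih w) (hker.1 _ _)
              _ = p v w := mul_one _
        _ = 1 := tsum_p_one hker v

lemma hitAux_mono : ∀ t v, hitAux p b c t v ≤ hitAux p b c (t+1) v := by
  intro t
  induction t with
  | zero =>
    intro v
    rw [hitAux_zero, hitAux_succ]
    by_cases h1 : v = b
    · simp [h1]
    by_cases h2 : v = c
    · simp [h1, h2]
    · simp only [if_neg h1, if_neg h2]
      exact tsum_nonneg fun w => mul_nonneg (hker.1 _ _) (hitAux_nonneg hker b c 0 w)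
  | succ t ih =>
    intro v
    rw [hitAux_succ, hitAux_succ]
    split
    · norm_num
    split
    · norm_num
    · exact Summable.tsum_le_tsum (fun w => mul_le_mul_of_nonneg_left (ih w) (hker.1 _ _))
        (summable_mul hker v _) (summable_mul hker v _)

lemma hitAux_monotone (v : V) : Monotone (fun t => hitAux p b c t v) :=
  monotone_nat_of_le_succ (fun t => hitAux_mono hker b c t v)

lemma hitAux_bdd (v : V) : BddAbove (Set.range (fun t => hitAux p b c t v)) :=
  ⟨1, by rintro x ⟨t, rfl⟩; exact hitAux_le_one hker b c t v⟩

lemma hitProb_tendsto (v : V) :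
    Filter.Tendsto (fun t => hitAux p b c t v) Filter.atTop (nhds (hitProb p b c v)) :=
  tendsto_atTop_ciSup (hitAux_monotone hker b c v) (hitAux_bdd hker b c v)

lemma hitProb_nonneg (v : V) : 0 ≤ hitProb p b c v :=
  le_of_tendsto_of_tendsto' tendsto_const_nhds (hitProb_tendsto hker b c v)
    (fun t => hitAux_nonneg hker b c t v)

lemma hitProb_le_one (v : V) : hitProb p b c v ≤ 1 :=
  le_of_tendsto_of_tendsto' (hitProb_tendsto hker b c v) tendsto_const_nhds
    (fun t => hitAux_le_one hker b c t v)

omit hker in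
lemma hitAux_base : ∀ t, hitAux p b c t b = 1 := by
  intro t; cases t <;> simp [hitAux]

lemma hitProb_base : hitProb p b c b = 1 := by
  unfold hitProb
  simp only [hitAux_base (p := p) b c]
  exact ciSup_const

omit hker in
lemma hitAux_target (hcb : c ≠ b) : ∀ t, hitAux p b c t c = 0 := by
  intro t; cases t <;> simp [hitAux, hcb]

lemma hitProb_target (hcb : c ≠ b) : hitProb p b c c = 0 := by
  unfold hitProb
  simp only [hitAux_target (p := p) b c hcb]
  exact ciSup_const

lemma PH_tendsto (u : V) :
    Filter.Tendsto (fun t => ∑' w, p u w * hitAux p b c t w) Filter.atTop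
      (nhds (∑' w, p u w * hitProb p b c w)) := by
  classical
  set s := (hker.2.2 u).toFinset with hs
  have hzero : ∀ (f : V → ℝ) (w : V), w ∉ s → p u w * f w = 0 := by
    intro f w hw
    simp only [hs, Set.Finite.mem_toFinset, Function.mem_support, not_not] at hw
    simp [hw]
  have key : ∀ f : V → ℝ, ∑' w, p u w * f w = ∑ w ∈ s, p u w * f w := by
    intro f; exact tsum_eq_sum (fun w hw => hzero f w hw)
  simp only [key]
  exact tendsto_finset_sum s (fun w _ =>
    Filter.Tendsto.const_mul _ (hitProb_tendsto hker b c w))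

lemma hitProb_harmonic (v : V) (hvb : v ≠ b) (hvc : v ≠ c) :
    hitProb p b c v = ∑' w, p v w * hitProb p b c w := by
  have h1 : Filter.Tendsto (fun t => hitAux p b c (t+1) v) Filter.atTop
      (nhds (hitProb p b c v)) :=
    (hitProb_tendsto hker b c v).comp (Filter.tendsto_add_atTop_nat 1)
  have h2 : (fun t => hitAux p b c (t+1) v) = fun t => ∑' w, p v w * hitAux p b c t w := by
    funext t; simp [hitAux, hvb, hvc]
  rw [h2] at h1
  exact tendsto_nhds_unique h1 (PH_tendsto hker b c v)

end lemmas

section rec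
variable {V : Type*} [Countable V] {p : V → V → ℝ} (hker : IsKernel p)
  (hirr : IrreducibleKernel p) (hrec : RecurrentKernel p)
include hker hirr hrec

lemma hit_one (b v : V) : hitProb p b b v = 1 := by
  -- key step: propagate along positive-probability edges
  have step : ∀ x y : V, hitProb p b b x = 1 → 0 < p x y → hitProb p b b y = 1 := by
    intro x y hx hxy
    have hsum : ∑' w, p x w * hitProb p b b w = 1 := by
      by_cases hxb : x = b
      · rw [hxb]; exact hrec b
      · rw [← hitProb_harmonic hker b b x hxb hxb, hx]
    have hsub : ∑' w, p x w * (1 - hitProb p b b w) = 0 := by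
      have h1 : Summable (fun w => p x w * (1 : ℝ)) := summable_mul hker x 1
      have h2 : Summable (fun w => p x w * hitProb p b b w) := summable_mul hker x _
      have : (fun w => p x w * (1 - hitProb p b b w)) =
          fun w => p x w * 1 - p x w * hitProb p b b w := by
        funext w; ring
      rw [this, Summable.tsum_sub h1 h2]
      simp only [mul_one] at *
      rw [tsum_p_one hker x, hsum]; ring
    have hle : p x y * (1 - hitProb p b b y) ≤ 0 := by
      rw [← hsub]
      exact Summable.le_tsum (by
        have h1 : Summable (fun w => p x w * (1 : ℝ)) := summable_mul hker x 1
        have h2 : Summable (fun w => p x w * hitProb p b b w) := summable_mul hker x _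
        have : (fun w => p x w * (1 - hitProb p b b w)) =
            fun w => p x w * 1 - p x w * hitProb p b b w := by
          funext w; ring
        rw [this]; exact h1.sub h2) y
        (fun w _ => mul_nonneg (hker.1 _ _) (sub_nonneg.2 (hitProb_le_one hker b b w)))
    have hge : 0 ≤ p x y * (1 - hitProb p b b y) :=
      mul_nonneg (le_of_lt hxy) (sub_nonneg.2 (hitProb_le_one hker b b y))
    have := le_antisymm hle hge
    have h0 : 1 - hitProb p b b y = 0 := by
      rcases mul_eq_zero.1 this with h | h
      · exact absurd h (ne_of_gt hxy)
      · exact h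
    linarith
  obtain ⟨n, f, hf0, hfn, hstep⟩ := hirr b v
  have : ∀ i ≤ n, hitProb p b b (f i) = 1 := by
    intro i hi
    induction i with
    | zero => rw [hf0]; exact hitProb_base hker b b
    | succ i ih =>
      exact step (f i) (f (i+1)) (ih (le_of_lt (Nat.lt_of_succ_le hi)))
        (hstep i (Nat.lt_of_succ_le hi))
  rw [← hfn]; exact this n le_rfl

end rec

section compl
variable {V : Type*} [Countable V] {p : V → V → ℝ} (hker : IsKernel p) (b c : V)
include hker
set_option linter.unusedSectionVars false

lemma hitAux_add_le_one (hbc : b ≠ c) :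
    ∀ t v, hitAux p b c t v + hitAux p c b t v ≤ 1 := by
  intro t
  induction t with
  | zero =>
    intro v
    rw [hitAux_zero, hitAux_zero]
    by_cases h1 : v = b
    · simp [h1, hbc, Ne.symm hbc]
    by_cases h2 : v = c
    · subst h2; simp [h1, Ne.symm hbc]
    · simp [h1, h2]
  | succ t ih =>
    intro v
    rw [hitAux_succ, hitAux_succ]
    by_cases h1 : v = b
    · subst h1; simp [hbc, Ne.symm hbc]
    by_cases h2 : v = c
    · subst h2; simp [h1, Ne.symm hbc]
    · simp only [if_neg h1, if_neg h2]
      rw [← Summable.tsum_add (summable_mul hker v _) (summable_mul hker v _)]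
      calc ∑' w, (p v w * hitAux p b c t w + p v w * hitAux p c b t w)
          ≤ ∑' w, p v w := by
            refine Summable.tsum_le_tsum (fun w => ?_)
              ((summable_mul hker v (hitAux p b c t)).add (summable_mul hker v (hitAux p c b t)))
              ((summable_mul hker v 1).congr (by simp))
            rw [← mul_add]
            calc p v w * (hitAux p b c t w + hitAux p c b t w) ≤ p v w * 1 :=
                  mul_le_mul_of_nonneg_left (ih w) (hker.1 _ _)
              _ = p v w := mul_one _
        _ = 1 := tsum_p_one hker v

lemma hitAux_ge_bb (hbc : b ≠ c) :
    ∀ t v, hitAux p b b t v ≤ hitAux p b c t v + hitAux p c b t v := by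
  intro t
  induction t with
  | zero =>
    intro v
    rw [hitAux_zero, hitAux_zero, hitAux_zero]
    by_cases h1 : v = b
    · subst h1; simp [hbc]
    · by_cases h2 : v = c <;> simp [h1, h2]
  | succ t ih =>
    intro v
    by_cases h1 : v = b
    · rw [hitAux_succ, hitAux_succ, hitAux_succ]
      subst h1; simp [hbc, Ne.symm hbc]
    by_cases h2 : v = c
    · have e1 : hitAux p c b (t+1) v = 1 := by rw [hitAux_succ]; simp [h2]
      have h3 := hitAux_le_one hker b b (t+1) v
      have h4 := hitAux_nonneg hker b c (t+1) v
      linarith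
    · rw [hitAux_succ, hitAux_succ, hitAux_succ]
      simp only [if_neg h1, if_neg h2]
      rw [← Summable.tsum_add (summable_mul hker v _) (summable_mul hker v _)]
      refine Summable.tsum_le_tsum (fun w => ?_) (summable_mul hker v _)
        ((summable_mul hker v (hitAux p b c t)).add (summable_mul hker v (hitAux p c b t)))
      rw [← mul_add]
      exact mul_le_mul_of_nonneg_left (ih w) (hker.1 _ _)

lemma hit_compl (hirr : IrreducibleKernel p) (hrec : RecurrentKernel p) (hbc : b ≠ c) (v : V) :
    hitProb p b c v + hitProb p c b v = 1 := by
  have hub : hitProb p b c v + hitProb p c b v ≤ 1 := by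
    have := Filter.Tendsto.add (hitProb_tendsto hker b c v) (hitProb_tendsto hker c b v)
    exact le_of_tendsto_of_tendsto' this tendsto_const_nhds
      (fun t => hitAux_add_le_one hker b c hbc t v)
  have hlb : 1 ≤ hitProb p b c v + hitProb p c b v := by
    have h2 := Filter.Tendsto.add (hitProb_tendsto hker b c v) (hitProb_tendsto hker c b v)
    have h1 := hitProb_tendsto hker b b v
    have := le_of_tendsto_of_tendsto' h1 h2 (fun t => hitAux_ge_bb hker b c hbc t v)
    rwa [hit_one hker hirr hrec b v] at this
  linarith

end compl

noncomputable def pk {V : Type*} (p : V → V → ℝ) : ℕ → V → V → ENNReal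
  | 0 => fun v w => if v = w then 1 else 0
  | s+1 => fun v w => ∑' x, ENNReal.ofReal (p v x) * pk p s x w

section enn
open ENNReal
variable {V : Type*} [Countable V] {p : V → V → ℝ} (hker : IsKernel p)
  {π : V → ℝ} (hπpos : ∀ v, 0 < π v) (hπ : ∀ v, HasSum (fun u => π u * p u v) (π v))
include hker hπpos hπ
set_option linter.unusedSectionVars false

lemma statE (w : V) :
    ∑' u, ENNReal.ofReal (π u) * ENNReal.ofReal (p u w) = ENNReal.ofReal (π w) := by
  calc ∑' u, ENNReal.ofReal (π u) * ENNReal.ofReal (p u w)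
      = ∑' u, ENNReal.ofReal (π u * p u w) := by
        refine tsum_congr fun u => ?_
        rw [ENNReal.ofReal_mul (hπpos u).le]
    _ = ENNReal.ofReal (∑' u, π u * p u w) :=
        (ENNReal.ofReal_tsum_of_nonneg (fun u => mul_nonneg (hπpos u).le (hker.1 u w))
          (hπ w).summable).symm
    _ = ENNReal.ofReal (π w) := by rw [(hπ w).tsum_eq]

lemma sumPE (u : V) : ∑' w, ENNReal.ofReal (p u w) = 1 := by
  rw [← ENNReal.ofReal_tsum_of_nonneg (hker.1 u) (hker.2.1 u).summable,
    tsum_p_one hker u, ENNReal.ofReal_one]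

lemma fubE (g : V → ENNReal) :
    ∑' v, ENNReal.ofReal (π v) * ∑' w, ENNReal.ofReal (p v w) * g w
      = ∑' w, ENNReal.ofReal (π w) * g w := by
  calc ∑' v, ENNReal.ofReal (π v) * ∑' w, ENNReal.ofReal (p v w) * g w
      = ∑' v, ∑' w, ENNReal.ofReal (π v) * (ENNReal.ofReal (p v w) * g w) := by
        exact tsum_congr fun v => ENNReal.tsum_mul_left.symm
    _ = ∑' w, ∑' v, ENNReal.ofReal (π v) * (ENNReal.ofReal (p v w) * g w) := ENNReal.tsum_comm
    _ = ∑' w, (∑' v, ENNReal.ofReal (π v) * ENNReal.ofReal (p v w)) * g w := by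
        refine tsum_congr fun w => ?_
        rw [← ENNReal.tsum_mul_right]
        exact tsum_congr fun v => by ring
    _ = ∑' w, ENNReal.ofReal (π w) * g w := by
        exact tsum_congr fun w => by rw [statE hker hπpos hπ w]

lemma statPk : ∀ (s : ℕ) (w : V),
    ∑' v, ENNReal.ofReal (π v) * pk p s v w = ENNReal.ofReal (π w) := by
  intro s
  induction s with
  | zero =>
    intro w
    rw [tsum_eq_single w (fun v hv => by simp [pk, hv])]
    simp [pk]
  | succ s ih =>
    intro w
    have : ∀ v, pk p (s+1) v w = ∑' x, ENNReal.ofReal (p v x) * pk p s x w := fun v => rfl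
    simp_rw [this]
    rw [fubE hker hπpos hπ (fun x => pk p s x w)]
    exact ih w

lemma HkRec (b c : V) (t : ℕ) (v : V) :
    ENNReal.ofReal (hitAux p b c (t+1) v) =
      if v = b then 1 else if v = c then 0
        else ∑' w, ENNReal.ofReal (p v w) * ENNReal.ofReal (hitAux p b c t w) := by
  rw [hitAux_succ]
  split_ifs with h1 h2
  · exact ENNReal.ofReal_one
  · exact ENNReal.ofReal_zero
  · rw [ENNReal.ofReal_tsum_of_nonneg
      (fun w => mul_nonneg (hker.1 v w) (hitAux_nonneg hker b c t w)) (summable_mul hker v _)]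
    exact tsum_congr fun w => ENNReal.ofReal_mul (hker.1 v w)

lemma hk_le (b c : V) : ∀ (t : ℕ) (v : V),
    ENNReal.ofReal (hitAux p b c t v) ≤ ∑ s ∈ Finset.range (t+1), pk p s v b := by
  intro t
  induction t with
  | zero =>
    intro v
    rw [hitAux_zero, Finset.sum_range_one]
    split_ifs with h1
    · simp [pk, h1]
    · simp
  | succ t ih =>
    intro v
    rw [HkRec hker hπpos hπ b c t v]
    split_ifs with h1 h2
    · calc (1 : ENNReal) = pk p 0 v b := by simp [pk, h1]
        _ ≤ ∑ s ∈ Finset.range (t+2), pk p s v b :=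
          Finset.single_le_sum (f := fun s => pk p s v b) (fun s _ => zero_le) (Finset.mem_range.2 (by norm_num : 0 < t+2))
    · exact zero_le
    · calc ∑' w, ENNReal.ofReal (p v w) * ENNReal.ofReal (hitAux p b c t w)
          ≤ ∑' w, ENNReal.ofReal (p v w) * ∑ s ∈ Finset.range (t+1), pk p s w b :=
            ENNReal.tsum_le_tsum fun w => mul_le_mul_right (ih w) _
        _ = ∑ s ∈ Finset.range (t+1), ∑' w, ENNReal.ofReal (p v w) * pk p s w b := by
            rw [← Summable.tsum_finsetSum (fun s _ => ENNReal.summable)]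
            exact tsum_congr fun w => Finset.mul_sum _ _ _
        _ = ∑ s ∈ Finset.range (t+1), pk p (s+1) v b := rfl
        _ ≤ ∑ s ∈ Finset.range (t+2), pk p s v b := by
            rw [Finset.sum_range_succ' (fun s => pk p s v b) (t+1)]
            exact le_self_add

lemma S_ne_top (b c : V) (t : ℕ) :
    ∑' v, ENNReal.ofReal (π v) * ENNReal.ofReal (hitAux p b c t v) ≠ ⊤ := by
  have hle : ∑' v, ENNReal.ofReal (π v) * ENNReal.ofReal (hitAux p b c t v)
      ≤ ∑ s ∈ Finset.range (t+1), ENNReal.ofReal (π b) := by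
    calc ∑' v, ENNReal.ofReal (π v) * ENNReal.ofReal (hitAux p b c t v)
        ≤ ∑' v, ENNReal.ofReal (π v) * ∑ s ∈ Finset.range (t+1), pk p s v b :=
          ENNReal.tsum_le_tsum fun v => mul_le_mul_right (hk_le hker hπpos hπ b c t v) _
      _ = ∑ s ∈ Finset.range (t+1), ∑' v, ENNReal.ofReal (π v) * pk p s v b := by
          rw [← Summable.tsum_finsetSum (fun s _ => ENNReal.summable)]
          exact tsum_congr fun v => Finset.mul_sum _ _ _
      _ = ∑ s ∈ Finset.range (t+1), ENNReal.ofReal (π b) :=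
          Finset.sum_congr rfl fun s _ => statPk hker hπpos hπ s b
  refine ne_top_of_le_ne_top ?_ hle
  simp only [Finset.sum_const, Finset.card_range, nsmul_eq_mul]
  exact ENNReal.mul_ne_top (by simp) ENNReal.ofReal_ne_top

omit hker hπpos hπ in
lemma split2 (b c : V) (hbc : b ≠ c) (F : V → ENNReal) :
    ∑' v, F v = F b + F c + ∑' v, (if v = b then 0 else if v = c then 0 else F v) := by
  rw [ENNReal.tsum_eq_add_tsum_ite b]
  rw [ENNReal.tsum_eq_add_tsum_ite (f := fun v => if v = b then 0 else F v) c]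
  rw [if_neg (Ne.symm hbc), add_assoc]
  congr 1
  congr 1
  exact tsum_congr fun v => by
    by_cases h1 : v = b <;> by_cases h2 : v = c <;> simp [h1, h2]

lemma PH_ofReal (u : V) (f : V → ℝ) (hf : ∀ w, 0 ≤ f w) :
    ∑' w, ENNReal.ofReal (p u w) * ENNReal.ofReal (f w)
      = ENNReal.ofReal (∑' w, p u w * f w) := by
  rw [ENNReal.ofReal_tsum_of_nonneg (fun w => mul_nonneg (hker.1 u w) (hf w))
    (summable_mul hker u f)]
  exact tsum_congr fun w => (ENNReal.ofReal_mul (hker.1 u w)).symm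

lemma step_ineq (b c : V) (hbc : b ≠ c) (t : ℕ) :
    π b * (∑' w, p b w * hitAux p b c t w) + π c * (∑' w, p c w * hitAux p b c t w) ≤ π b := by
  classical
  set PI : V → ENNReal := fun v => ENNReal.ofReal (π v) with hPIdef
  set Hk : ℕ → V → ENNReal := fun τ v => ENNReal.ofReal (hitAux p b c τ v) with hHk
  set PH : V → ENNReal := fun v => ∑' w, ENNReal.ofReal (p v w) * Hk t w with hPH
  set R : ENNReal := ∑' v, (if v = b then 0 else if v = c then 0 else PI v * PH v) with hR
  have e1 : ∑' v, PI v * PH v = ∑' v, PI v * Hk t v := fubE hker hπpos hπ (Hk t)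
  have e2 : ∑' v, PI v * Hk (t+1) v = PI b + R := by
    rw [split2 b c hbc (fun v => PI v * Hk (t+1) v)]
    have hb1 : Hk (t+1) b = 1 := by
      simp only [hHk, hitAux_base (p := p) b c (t+1), ENNReal.ofReal_one]
    have hc0 : Hk (t+1) c = 0 := by
      simp only [hHk, hitAux_target (p := p) b c (Ne.symm hbc) (t+1), ENNReal.ofReal_zero]
    rw [hb1, hc0, mul_one, mul_zero, add_zero]
    congr 1
    rw [hR]
    refine tsum_congr fun v => ?_
    by_cases h1 : v = b
    · simp [h1]
    by_cases h2 : v = c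
    · simp [h1, h2]
    · simp only [if_neg h1, if_neg h2]
      congr 1
      simp only [hHk, hPH]
      rw [HkRec hker hπpos hπ b c t v, if_neg h1, if_neg h2]
  have e3 : ∑' v, PI v * PH v = PI b * PH b + PI c * PH c + R :=
    split2 b c hbc (fun v => PI v * PH v)
  have hmono : ∑' v, PI v * Hk t v ≤ ∑' v, PI v * Hk (t+1) v :=
    ENNReal.tsum_le_tsum fun v =>
      mul_le_mul_right (ENNReal.ofReal_le_ofReal (hitAux_mono hker b c t v)) _
  have hRne : R ≠ ⊤ := by
    refine ne_top_of_le_ne_top ?_ (le_add_self : R ≤ PI b + R)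
    rw [← e2]
    exact S_ne_top hker hπpos hπ b c (t+1)
  have key : PI b * PH b + PI c * PH c ≤ PI b := by
    have : PI b * PH b + PI c * PH c + R ≤ PI b + R := by
      rw [← e3, e1, ← e2]; exact hmono
    exact (ENNReal.add_le_add_iff_right hRne).1 this
  -- translate back to ℝ
  have hPHb : PH b = ENNReal.ofReal (∑' w, p b w * hitAux p b c t w) :=
    PH_ofReal hker hπpos hπ b _ (fun w => hitAux_nonneg hker b c t w)
  have hPHc : PH c = ENNReal.ofReal (∑' w, p c w * hitAux p b c t w) :=
    PH_ofReal hker hπpos hπ c _ (fun w => hitAux_nonneg hker b c t w)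
  rw [hPHb, hPHc, hPIdef] at key
  simp only at key
  rw [← ENNReal.ofReal_mul (hπpos b).le, ← ENNReal.ofReal_mul (hπpos c).le,
    ← ENNReal.ofReal_add
      (mul_nonneg (hπpos b).le (tsum_nonneg fun w =>
        mul_nonneg (hker.1 b w) (hitAux_nonneg hker b c t w)))
      (mul_nonneg (hπpos c).le (tsum_nonneg fun w =>
        mul_nonneg (hker.1 c w) (hitAux_nonneg hker b c t w)))] at key
  exact (ENNReal.ofReal_le_ofReal_iff (hπpos b).le).1 key

lemma key_ineq (b c : V) (hbc : b ≠ c) :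
    π b * (∑' w, p b w * hitProb p b c w) + π c * (∑' w, p c w * hitProb p b c w) ≤ π b := by
  have h1 : Filter.Tendsto
      (fun t => π b * (∑' w, p b w * hitAux p b c t w) + π c * (∑' w, p c w * hitAux p b c t w))
      Filter.atTop
      (nhds (π b * (∑' w, p b w * hitProb p b c w) + π c * (∑' w, p c w * hitProb p b c w))) :=
    Filter.Tendsto.add ((PH_tendsto hker b c b).const_mul (π b))
      ((PH_tendsto hker b c c).const_mul (π c))
  exact le_of_tendsto h1 (Filter.Eventually.of_forall (step_ineq hker hπpos hπ b c hbc))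

end enn


/-- Lemma `escape`: `π(b) e_{b,c} = π(c) e_{c,b}`, and `Δh(b) = -e_{b,c}`,
`Δh(c) = e_{c,b}` for `h = h_{b,c}`. -/
theorem escape_probability_identities {V : Type*} [Countable V]
    (p : V → V → ℝ) (hker : IsKernel p)
    (hirr : IrreducibleKernel p) (hrec : RecurrentKernel p)
    (π : V → ℝ) (hπpos : ∀ v, 0 < π v)
    (hπ : ∀ v, HasSum (fun u => π u * p u v) (π v))
    (b c : V) (hbc : b ≠ c)
    (h : V → ℝ) (hh : h = hitProb p b c)
    (Δh : V → ℝ) (hΔ : ∀ u, Δh u = (∑' v, p u v * h v) - h u) :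
    π b * escProb p b c = π c * escProb p c b ∧
    Δh b = -escProb p b c ∧ Δh c = escProb p c b := by
  subst hh
  set Ph : V → ℝ := fun u => ∑' w, p u w * hitProb p b c w with hPh
  set Pg : V → ℝ := fun u => ∑' w, p u w * hitProb p c b w with hPgdef
  have compl : ∀ w, hitProb p c b w = 1 - hitProb p b c w := by
    intro w
    have := hit_compl hker b c hirr hrec hbc w
    linarith
  have hPg : ∀ u, Pg u = 1 - Ph u := by
    intro u
    have e : (fun w => p u w * hitProb p c b w)
        = fun w => p u w * 1 - p u w * hitProb p b c w := by
      funext w; rw [compl w]; ring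
    rw [hPgdef]
    simp only [e]
    rw [Summable.tsum_sub ((summable_mul hker u fun _ => 1)) (summable_mul hker u _)]
    simp only [mul_one]
    rw [tsum_p_one hker u]
  have k1 : π b * Ph b + π c * Ph c ≤ π b := key_ineq hker hπpos hπ b c hbc
  have k2 : π c * Pg c + π b * Pg b ≤ π c := key_ineq hker hπpos hπ c b (Ne.symm hbc)
  have k2' : π b ≤ π b * Ph b + π c * Ph c := by
    rw [hPg c, hPg b] at k2
    nlinarith [hπpos b, hπpos c]
  have eqn : π b * Ph b + π c * Ph c = π b := le_antisymm k1 k2'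
  have escbc : escProb p b c = Pg b := rfl
  have esccb : escProb p c b = Ph c := rfl
  have hb1 : hitProb p b c b = 1 := hitProb_base hker b c
  have hc0 : hitProb p b c c = 0 := hitProb_target hker b c (Ne.symm hbc)
  refine ⟨?_, ?_, ?_⟩
  · rw [escbc, esccb, hPg b]; nlinarith [hπpos b, hπpos c]
  · rw [hΔ b, hb1, escbc, hPg b]
    have : (∑' v, p b v * hitProb p b c v) = Ph b := rfl
    rw [this]; ring
  · rw [hΔ c, hc0, esccb]
    have : (∑' v, p c v * hitProb p b c v) = Ph c := rfl
    rw [this]; ring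
end
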